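/- arXiv:2309.10585 — 5 statements merged into one kernel-verified Lean document; each statement's English description precedes it below -/
import Mathlib

section
/- Assume Hom(X⟦1⟧, Y) = 0 and Hom(X⟦1⟧, M) = 0. Let α ∈ End(X) and α¹ ∈ End(M ⊞ M₁) satisfy α ≫ d̄ = d̄ ≫ α¹ (i.e. (α, α¹) is a chain endomorphism of the two-term complex X ⟶d̄ M ⊞ M₁). Then the following are equivalent: (i) there exists s : M ⊞ M₁ ⟶ X with α = d̄ ≫ s and α¹ = s ≫ d̄ (i.e. (α, α¹) is null-homotopic); (ii) α¹ ≫ ḡ = 0. -/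
open CategoryTheory CategoryTheory.Limits CategoryTheory.Pretriangulated

universe v u

/-- Let `T` be a pretriangulated category with binary biproducts,
`M` an object of `T` and `X ⟶f M₁ ⟶g Y ⟶h X⟦1⟧` a distinguished triangle.
Write `d̄ = biprod.lift 0 f : X ⟶ M ⊞ M₁` and `ḡ = biprod.map (𝟙 M) g : M ⊞ M₁ ⟶ M ⊞ Y`.
Assume `Hom(X⟦1⟧, Y) = 0` and `Hom(X⟦1⟧, M) = 0`. If `(α, α¹)` is a chain
endomorphism of the two-term complex `X ⟶d̄ M ⊞ M₁` (i.e. `α ≫ d̄ = d̄ ≫ α¹`),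
then `(α, α¹)` is null-homotopic iff `α¹ ≫ ḡ = 0`. -/
theorem statement4 {T : Type u} [Category.{v} T] [Preadditive T] [HasZeroObject T]
    [HasShift T ℤ] [∀ n : ℤ, (shiftFunctor T n).Additive] [Pretriangulated T]
    [HasBinaryBiproducts T]
    (M X M₁ Y : T) (f : X ⟶ M₁) (g : M₁ ⟶ Y) (h : Y ⟶ X⟦(1 : ℤ)⟧)
    (hT : Triangle.mk f g h ∈ distTriang T)
    (hXY : ∀ φ : (X⟦(1 : ℤ)⟧ : T) ⟶ Y, φ = 0)
    (hXM : ∀ φ : (X⟦(1 : ℤ)⟧ : T) ⟶ M, φ = 0)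
    (α : X ⟶ X) (α₁ : M ⊞ M₁ ⟶ M ⊞ M₁)
    (hcomm : α ≫ biprod.lift (0 : X ⟶ M) f = biprod.lift (0 : X ⟶ M) f ≫ α₁) :
    (∃ s : M ⊞ M₁ ⟶ X, α = biprod.lift (0 : X ⟶ M) f ≫ s ∧
        α₁ = s ≫ biprod.lift (0 : X ⟶ M) f) ↔
      α₁ ≫ biprod.map (𝟙 M) g = 0 := by

  have hfg : f ≫ g = 0 := comp_distTriang_mor_zero₁₂ _ hT
  constructor
  · rintro ⟨s, -, rfl⟩
    ext <;> simp [hfg]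
  · intro h0
    -- components of the hypothesis
    have hfst : α₁ ≫ biprod.fst = 0 := by
      have := h0 =≫ biprod.fst
      simpa using this
    have hsndg : (α₁ ≫ biprod.snd) ≫ g = 0 := by
      have := h0 =≫ biprod.snd
      simpa using this
    obtain ⟨t, ht⟩ := Triangle.coyoneda_exact₂ _ hT (α₁ ≫ biprod.snd) hsndg
    change M ⊞ M₁ ⟶ X at t
    change α₁ ≫ biprod.snd = t ≫ f at ht
    refine ⟨t, ?_, ?_⟩
    · -- α = d̄ ≫ t
      have hαf : (α - biprod.lift (0 : X ⟶ M) f ≫ t) ≫ f = 0 := by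
        have h2 := hcomm =≫ biprod.snd
        simp only [Category.assoc, biprod.lift_snd] at h2
        simp [Preadditive.sub_comp, h2, ← ht]
      have he : (α - biprod.lift (0 : X ⟶ M) f ≫ t)⟦(1:ℤ)⟧' = 0 := by
        obtain ⟨b, hb⟩ := Triangle.coyoneda_exact₁ _ hT
          (((α - biprod.lift (0 : X ⟶ M) f ≫ t)⟦(1:ℤ)⟧' : X⟦(1:ℤ)⟧ ⟶ X⟦(1:ℤ)⟧))
          (by change _ ≫ f⟦(1:ℤ)⟧' = 0; rw [← Functor.map_comp, hαf, Functor.map_zero])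
        change (X⟦(1:ℤ)⟧ : T) ⟶ Y at b
        change _ = b ≫ h at hb
        rw [hb, hXY b, zero_comp]
      have hz : α - biprod.lift (0 : X ⟶ M) f ≫ t = 0 :=
        (shiftFunctor T (1:ℤ)).map_injective (by rw [he, Functor.map_zero])
      rw [sub_eq_zero] at hz
      exact hz
    · -- α₁ = t ≫ d̄
      ext <;> simp [Category.assoc, hfst, ht]
end

section
/- Assume Hom(X⟦1⟧, Y) = 0 and Hom(X⟦1⟧, M) = 0. Let α¹ ∈ End(M ⊞ M₁) be such that there exists α ∈ End(X) with α ≫ d̄ = d̄ ≫ α¹. Then there exists a unique β ∈ End(M ⊞ Y) with α¹ ≫ ḡ = ḡ ≫ β; moreover this β lies in the subring B of End(M ⊞ Y). -/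
open CategoryTheory CategoryTheory.Limits CategoryTheory.Pretriangulated

universe v u

/-- Let `T` be a pretriangulated category with binary biproducts,
`M` an object of `T` and `X ⟶f M₁ ⟶g Y ⟶h X⟦1⟧` a distinguished triangle.
Write `d̄ = biprod.lift 0 f : X ⟶ M ⊞ M₁` and `ḡ = biprod.map (𝟙 M) g : M ⊞ M₁ ⟶ M ⊞ Y`.
Assume `Hom(X⟦1⟧, Y) = 0` and `Hom(X⟦1⟧, M) = 0`. If `α¹ ∈ End(M ⊞ M₁)` admits
`α ∈ End(X)` with `α ≫ d̄ = d̄ ≫ α¹`, then there is a unique `β ∈ End(M ⊞ Y)` with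
`α¹ ≫ ḡ = ḡ ≫ β`, and this `β` lies in the subring `B`. -/
theorem statement5 {T : Type u} [Category.{v} T] [Preadditive T] [HasZeroObject T]
    [HasShift T ℤ] [∀ n : ℤ, (shiftFunctor T n).Additive] [Pretriangulated T]
    [HasBinaryBiproducts T]
    (M X M₁ Y : T) (f : X ⟶ M₁) (g : M₁ ⟶ Y) (h : Y ⟶ X⟦(1 : ℤ)⟧)
    (hT : Triangle.mk f g h ∈ distTriang T)
    (hXY : ∀ φ : (X⟦(1 : ℤ)⟧ : T) ⟶ Y, φ = 0)
    (hXM : ∀ φ : (X⟦(1 : ℤ)⟧ : T) ⟶ M, φ = 0)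
    (B : Set (M ⊞ Y ⟶ M ⊞ Y))
    (hB : B = {ψ | (∃ t' : M₁ ⟶ M₁, g ≫ (biprod.inr ≫ ψ ≫ biprod.snd) = t' ≫ g) ∧
        (∃ s : M ⟶ M₁, biprod.inl ≫ ψ ≫ biprod.snd = s ≫ g)})
    (α₁ : M ⊞ M₁ ⟶ M ⊞ M₁)
    (hα : ∃ α : X ⟶ X, α ≫ biprod.lift (0 : X ⟶ M) f = biprod.lift (0 : X ⟶ M) f ≫ α₁) :
    (∃! β : M ⊞ Y ⟶ M ⊞ Y, α₁ ≫ biprod.map (𝟙 M) g = biprod.map (𝟙 M) g ≫ β) ∧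
      (∀ β : M ⊞ Y ⟶ M ⊞ Y, α₁ ≫ biprod.map (𝟙 M) g = biprod.map (𝟙 M) g ≫ β →
        β ∈ B) := by
  obtain ⟨α, hα⟩ := hα
  -- rewrite d̄ as f ≫ inr
  have hd : biprod.lift (0 : X ⟶ M) f = f ≫ biprod.inr := by
    apply biprod.hom_ext <;> simp
  rw [hd] at hα
  -- derived equations
  have hc : f ≫ (biprod.inr ≫ α₁ ≫ biprod.fst) = 0 := by
    have := congrArg (fun u => u ≫ biprod.fst) hα
    simpa using this.symm
  have hdd : f ≫ (biprod.inr ≫ α₁ ≫ biprod.snd) = α ≫ f := by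
    have := congrArg (fun u => u ≫ biprod.snd) hα
    simpa using this.symm
  have hfg : f ≫ g = 0 := comp_distTriang_mor_zero₁₂ _ hT
  -- uniqueness helper
  have uniq : ∀ {Z : T}, (∀ φ : (X⟦(1:ℤ)⟧ : T) ⟶ Z, φ = 0) →
      ∀ v v' : Y ⟶ Z, g ≫ v = g ≫ v' → v = v' := by
    intro Z hZ v v' hvv
    have : g ≫ (v - v') = 0 := by
      rw [Preadditive.comp_sub, hvv, sub_self]
    obtain ⟨φ, hφ⟩ := Triangle.yoneda_exact₃ _ hT (v - v') this
    have := hZ φ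
    rw [this] at hφ
    exact sub_eq_zero.mp (hφ.trans comp_zero)
  -- existence of r and s
  obtain ⟨r, hr⟩ : ∃ r : Y ⟶ M, biprod.inr ≫ α₁ ≫ biprod.fst = g ≫ r := Triangle.yoneda_exact₂ _ hT (biprod.inr ≫ α₁ ≫ biprod.fst) hc
  have hs0 : f ≫ ((biprod.inr ≫ α₁ ≫ biprod.snd) ≫ g) = 0 := by
    rw [← Category.assoc, hdd, Category.assoc, hfg, comp_zero]
  obtain ⟨s, hs⟩ : ∃ s : Y ⟶ Y, (biprod.inr ≫ α₁ ≫ biprod.snd) ≫ g = g ≫ s := Triangle.yoneda_exact₂ _ hT ((biprod.inr ≫ α₁ ≫ biprod.snd) ≫ g) hs0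
  have hr' : biprod.inr ≫ α₁ ≫ biprod.fst = g ≫ r := hr
  have hs' : biprod.inr ≫ α₁ ≫ biprod.snd ≫ g = g ≫ s := by
    calc _ = (biprod.inr ≫ α₁ ≫ biprod.snd) ≫ g := by simp only [Category.assoc]
      _ = g ≫ s := hs
  refine ⟨⟨biprod.desc (biprod.lift (biprod.inl ≫ α₁ ≫ biprod.fst)
      (biprod.inl ≫ α₁ ≫ biprod.snd ≫ g)) (biprod.lift r s), ?_, ?_⟩, ?_⟩
  · apply biprod.hom_ext' <;> apply biprod.hom_ext <;>
      simp [hr', hs', biprod.inl_map_assoc, biprod.inr_map_assoc]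
  · intro β hβ
    have h1 : biprod.inl ≫ β = biprod.inl ≫ α₁ ≫ biprod.map (𝟙 M) g := by
      have := congrArg (fun u => biprod.inl ≫ u) hβ
      simpa using this.symm
    have h2 : g ≫ (biprod.inr ≫ β) = biprod.inr ≫ α₁ ≫ biprod.map (𝟙 M) g := by
      have := congrArg (fun u => biprod.inr ≫ u) hβ
      simp only [← Category.assoc, biprod.inr_map] at this ⊢
      simpa using this.symm
    apply biprod.hom_ext'
    · rw [h1]
      apply biprod.hom_ext <;> simp
    · apply biprod.hom_ext
      · refine uniq hXM _ _ ?_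
        have := congrArg (fun u => u ≫ biprod.fst) h2
        simp only [Category.assoc] at this ⊢
        rw [this]
        simp [hr']
      · refine uniq hXY _ _ ?_
        have := congrArg (fun u => u ≫ biprod.snd) h2
        simp only [Category.assoc] at this ⊢
        rw [this]
        simp [hs']
  · intro β hβ
    subst hB
    constructor
    · refine ⟨biprod.inr ≫ α₁ ≫ biprod.snd, ?_⟩
      have := congrArg (fun u => biprod.inr ≫ u ≫ biprod.snd) hβ
      simp only [Category.assoc, biprod.inr_map_assoc, biprod.map_snd,
        Category.id_comp] at this
      simp only [Category.assoc]
      rw [← this]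
    · refine ⟨biprod.inl ≫ α₁ ≫ biprod.snd, ?_⟩
      have := congrArg (fun u => biprod.inl ≫ u ≫ biprod.snd) hβ
      simp only [Category.assoc, biprod.inl_map_assoc, biprod.map_snd,
        Category.id_comp] at this
      simp only [Category.assoc]
      exact this.symm
end

section
/- For every β ∈ B there exist α ∈ End(X) and α¹ ∈ End(M ⊞ M₁) such that α ≫ d̄ = d̄ ≫ α¹ and α¹ ≫ ḡ = ḡ ≫ β; that is, every element of B is induced by a chain endomorphism of the two-term complex X ⟶d̄ M ⊞ M₁ via completion to an endomorphism of the distinguished triangle X ⟶d̄ M ⊞ M₁ ⟶ḡ M ⊞ Y ⟶ X⟦1⟧. -/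
open CategoryTheory CategoryTheory.Limits CategoryTheory.Pretriangulated

universe v u

/-- Let `T` be a pretriangulated category with binary biproducts,
`M` an object of `T` and `X ⟶f M₁ ⟶g Y ⟶h X⟦1⟧` a distinguished triangle.
Write `d̄ = biprod.lift 0 f : X ⟶ M ⊞ M₁` and `ḡ = biprod.map (𝟙 M) g : M ⊞ M₁ ⟶ M ⊞ Y`.
Every `β ∈ B` is induced by a chain endomorphism of `X ⟶d̄ M ⊞ M₁`: there are
`α ∈ End(X)` and `α¹ ∈ End(M ⊞ M₁)` with `α ≫ d̄ = d̄ ≫ α¹` and `α¹ ≫ ḡ = ḡ ≫ β`. -/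
theorem statement6 {T : Type u} [Category.{v} T] [Preadditive T] [HasZeroObject T]
    [HasShift T ℤ] [∀ n : ℤ, (shiftFunctor T n).Additive] [Pretriangulated T]
    [HasBinaryBiproducts T]
    (M X M₁ Y : T) (f : X ⟶ M₁) (g : M₁ ⟶ Y) (h : Y ⟶ X⟦(1 : ℤ)⟧)
    (hT : Triangle.mk f g h ∈ distTriang T)
    (B : Set (M ⊞ Y ⟶ M ⊞ Y))
    (hB : B = {ψ | (∃ t' : M₁ ⟶ M₁, g ≫ (biprod.inr ≫ ψ ≫ biprod.snd) = t' ≫ g) ∧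
        (∃ s : M ⟶ M₁, biprod.inl ≫ ψ ≫ biprod.snd = s ≫ g)}) :
    ∀ β ∈ B, ∃ (α : X ⟶ X) (α₁ : M ⊞ M₁ ⟶ M ⊞ M₁),
      α ≫ biprod.lift (0 : X ⟶ M) f = biprod.lift (0 : X ⟶ M) f ≫ α₁ ∧
      α₁ ≫ biprod.map (𝟙 M) g = biprod.map (𝟙 M) g ≫ β := by
  intro β hβ
  rw [hB] at hβ
  obtain ⟨⟨t', ht'⟩, s, hs⟩ := hβ
  obtain ⟨α, hα⟩ : ∃ α : X ⟶ X, f ≫ t' = α ≫ f := Triangle.coyoneda_exact₂ _ hT (f ≫ t') (by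
    have hfg : f ≫ g = 0 := comp_distTriang_mor_zero₁₂ _ hT
    change (f ≫ t') ≫ g = 0
    rw [Category.assoc, ← ht', ← Category.assoc, ← Category.assoc, hfg, zero_comp,
      zero_comp])
  refine ⟨α, biprod.lift (biprod.desc (biprod.inl ≫ β ≫ biprod.fst)
      (g ≫ biprod.inr ≫ β ≫ biprod.fst)) (biprod.desc s t'), ?_, ?_⟩
  · have hfg : f ≫ g = 0 := comp_distTriang_mor_zero₁₂ _ hT
    change f ≫ t' = α ≫ f at hα
    ext
    · simp [reassoc_of% hfg]
    · simp [← hα]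
  · ext
    · simp
    · simp [hs]
    · simp
    · simp [← ht']
end

section
/- Assume Hom(X⟦1⟧, Y) = 0 and Hom(X⟦1⟧, M) = 0. Then there is a ring isomorphism End_{K(T)}(P•) ≅ B between the endomorphism ring of the complex P• in the homotopy category K(T) and the subring B of End(M ⊞ Y). The isomorphism sends the homotopy class of a chain endomorphism (α, α¹) of P• to the unique β ∈ End(M ⊞ Y) satisfying α¹ ≫ ḡ = ḡ ≫ β. -/
open CategoryTheory CategoryTheory.Limits CategoryTheory.Pretriangulated ZeroObject

universe v u

/-- The object part of the cochain complex concentrated in degrees `0` and `1`,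
with `A` in degree `0` and `B` in degree `1`. -/
noncomputable def twoObj {C : Type u} [Category.{v} C] [HasZeroObject C]
    (A B : C) (i : ℤ) : C :=
  if i = 0 then A else if i = 1 then B else 0

/-- The cochain complex over `C` concentrated in degrees `0` and `1`, with
`A` in degree `0`, `B` in degree `1` and differential `d : A ⟶ B`. -/
noncomputable def twoTermComplex {C : Type u} [Category.{v} C] [Preadditive C]
    [HasZeroObject C] {A B : C} (d : A ⟶ B) : CochainComplex C ℤ where
  X := twoObj A B
  d i j :=
    if hij : i = 0 ∧ j = 1 then
      eqToHom (show twoObj A B i = A by simp [twoObj, hij.1]) ≫ d ≫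
        eqToHom (show B = twoObj A B j by simp [twoObj, hij.2])
    else 0
  shape i j hij := by
    beta_reduce
    rw [dif_neg]
    rintro ⟨rfl, rfl⟩
    exact hij rfl
  d_comp_d' i j k hij hjk := by
    beta_reduce
    by_cases h' : i = 0 ∧ j = 1
    · rw [dif_neg (fun hk : j = 0 ∧ k = 1 => by simp [h'.2] at hk), comp_zero]
    · rw [dif_neg h', zero_comp]

set_option linter.unusedSectionVars false

section TwoTerm

variable {C : Type u} [Category.{v} C] [Preadditive C] [HasZeroObject C]

theorem twoObj_zero (A B : C) : twoObj A B 0 = A := by simp [twoObj]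

theorem twoObj_one (A B : C) : twoObj A B 1 = B := by simp [twoObj]

theorem twoObj_isZero (A B : C) (i : ℤ) (h0 : i ≠ 0) (h1 : i ≠ 1) :
    IsZero (twoObj A B i) := by
  simp only [twoObj, if_neg h0, if_neg h1]
  exact isZero_zero C

variable {A B : C} (d : A ⟶ B)

theorem twoTermComplex_X (i : ℤ) : (twoTermComplex d).X i = twoObj A B i := rfl

attribute [local simp] twoTermComplex_X

theorem twoTermComplex_d01 :
    (twoTermComplex d).d 0 1 =
      eqToHom (twoObj_zero A B) ≫ d ≫ eqToHom (twoObj_one A B).symm := by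
  dsimp only [twoTermComplex]
  rw [dif_pos ⟨rfl, rfl⟩]

theorem twoTermComplex_d_eq_zero {i j : ℤ} (hij : ¬ (i = 0 ∧ j = 1)) :
    (twoTermComplex d).d i j = 0 := by
  dsimp only [twoTermComplex]
  rw [dif_neg hij]
  rfl

/-- chain map constructor -/
noncomputable def twoHom (u : A ⟶ A) (v : B ⟶ B) (huv : u ≫ d = d ≫ v) :
    twoTermComplex d ⟶ twoTermComplex d where
  f i :=
    if h0 : i = 0 then
      eqToHom (show twoObj A B i = A by rw [h0]; exact twoObj_zero A B) ≫ u ≫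
        eqToHom (show A = twoObj A B i by rw [h0]; exact (twoObj_zero A B).symm)
    else if h1 : i = 1 then
      eqToHom (show twoObj A B i = B by rw [h1]; exact twoObj_one A B) ≫ v ≫
        eqToHom (show B = twoObj A B i by rw [h1]; exact (twoObj_one A B).symm)
    else 0
  comm' i j _ := by
    by_cases hij : i = 0 ∧ j = 1
    · obtain ⟨rfl, rfl⟩ := hij
      rw [twoTermComplex_d01]
      simp [reassoc_of% huv]
    · rw [twoTermComplex_d_eq_zero d hij, comp_zero, zero_comp]

theorem twoHom_f0 (u : A ⟶ A) (v : B ⟶ B) (huv : u ≫ d = d ≫ v) :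
    (twoHom d u v huv).f 0 =
      eqToHom (twoObj_zero A B) ≫ u ≫ eqToHom (twoObj_zero A B).symm := by
  simp [twoHom]

theorem twoHom_f1 (u : A ⟶ A) (v : B ⟶ B) (huv : u ≫ d = d ≫ v) :
    (twoHom d u v huv).f 1 =
      eqToHom (twoObj_one A B) ≫ v ≫ eqToHom (twoObj_one A B).symm := by
  simp [twoHom]

theorem sq_aux {X0 X1 : C} (p0 : X0 = A) (p1 : X1 = B) (a : X0 ⟶ X0) (b : X1 ⟶ X1)
    (h : a ≫ eqToHom p0 ≫ d ≫ eqToHom p1.symm = (eqToHom p0 ≫ d ≫ eqToHom p1.symm) ≫ b) :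
    (eqToHom p0.symm ≫ a ≫ eqToHom p0) ≫ d = d ≫ (eqToHom p1.symm ≫ b ≫ eqToHom p1) := by
  subst p0 p1; simpa using h

theorem h0_aux {X0 X1 : C} (p0 : X0 = A) (p1 : X1 = B) (a b : X0 ⟶ X0) (s : B ⟶ A)
    (hc : eqToHom p0.symm ≫ a ≫ eqToHom p0 = d ≫ s + eqToHom p0.symm ≫ b ≫ eqToHom p0) :
    a = (eqToHom p0 ≫ d ≫ eqToHom p1.symm) ≫ eqToHom p1 ≫ s ≫ eqToHom p0.symm + b := by
  subst p0 p1; simpa using hc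

theorem h1_aux {X0 X1 : C} (p0 : X0 = A) (p1 : X1 = B) (a b : X1 ⟶ X1) (s : B ⟶ A)
    (hc : eqToHom p1.symm ≫ a ≫ eqToHom p1 = s ≫ d + eqToHom p1.symm ≫ b ≫ eqToHom p1) :
    a = (eqToHom p1 ≫ s ≫ eqToHom p0.symm) ≫ eqToHom p0 ≫ d ≫ eqToHom p1.symm + b := by
  subst p0 p1; simpa using hc

theorem hd0_aux {X0 X1 : C} (p0 : X0 = A) (p1 : X1 = B) (k : X1 ⟶ X0) (b : X0 ⟶ X0) :
    eqToHom p0.symm ≫ ((eqToHom p0 ≫ d ≫ eqToHom p1.symm) ≫ k + b) ≫ eqToHom p0 =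
      d ≫ (eqToHom p1.symm ≫ k ≫ eqToHom p0) + eqToHom p0.symm ≫ b ≫ eqToHom p0 := by
  subst p0 p1; simp

theorem hd1_aux {X0 X1 : C} (p0 : X0 = A) (p1 : X1 = B) (k : X1 ⟶ X0) (b : X1 ⟶ X1) :
    eqToHom p1.symm ≫ (k ≫ eqToHom p0 ≫ d ≫ eqToHom p1.symm + b) ≫ eqToHom p1 =
      (eqToHom p1.symm ≫ k ≫ eqToHom p0) ≫ d + eqToHom p1.symm ≫ b ≫ eqToHom p1 := by
  subst p0 p1; simp

theorem eqc_id {X Y : C} (p : Y = X) (q : X = Y) : eqToHom p ≫ 𝟙 X ≫ eqToHom q = 𝟙 Y := by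
  subst p; simp

theorem eqc_add {X Y : C} (p : Y = X) (q : X = Y) (a b : X ⟶ X) :
    eqToHom p ≫ (a + b) ≫ eqToHom q = eqToHom p ≫ a ≫ eqToHom q + eqToHom p ≫ b ≫ eqToHom q := by
  subst p; simp

theorem eqc_comp {X Y : C} (p : Y = X) (q : X = Y) (a b : X ⟶ X) :
    eqToHom p ≫ (a ≫ b) ≫ eqToHom q =
      eqToHom p ≫ (a ≫ eqToHom q) ≫ eqToHom p ≫ b ≫ eqToHom q := by
  subst p; simp

theorem eqc_inv {X Y : C} (p : Y = X) (q : X = Y) (p' : X = Y) (q' : Y = X) (v : Y ⟶ Y) :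
    eqToHom p ≫ (eqToHom p' ≫ v ≫ eqToHom q') ≫ eqToHom q = v := by
  subst p; simp

/-- From a chain endomorphism, get the commuting square on components. -/
theorem twoHom_square (φ : twoTermComplex d ⟶ twoTermComplex d) :
    (eqToHom (twoObj_zero A B).symm ≫ φ.f 0 ≫ eqToHom (twoObj_zero A B)) ≫ d =
      d ≫ (eqToHom (twoObj_one A B).symm ≫ φ.f 1 ≫ eqToHom (twoObj_one A B)) := by
  have := φ.comm 0 1
  rw [twoTermComplex_d01] at this
  exact sq_aux d (twoObj_zero A B) (twoObj_one A B) (φ.f 0) (φ.f 1) this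

/-- the homotopy candidate -/
noncomputable def tHom (s : B ⟶ A) :
    ∀ i j : ℤ, (twoTermComplex d).X i ⟶ (twoTermComplex d).X j := fun i j =>
  if hij : i = 1 ∧ j = 0 then
    eqToHom (show twoObj A B i = B by rw [hij.1]; exact twoObj_one A B) ≫ s ≫
      eqToHom (show A = twoObj A B j by rw [hij.2]; exact (twoObj_zero A B).symm)
  else 0

theorem tHom_one_zero (s : B ⟶ A) :
    tHom d s 1 0 = eqToHom (twoObj_one A B) ≫ s ≫ eqToHom (twoObj_zero A B).symm := by
  simp [tHom]

theorem tHom_ne (s : B ⟶ A) {i j : ℤ} (hij : ¬ (i = 1 ∧ j = 0)) : tHom d s i j = 0 :=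
  dif_neg hij

/-- homotopy constructor -/
noncomputable def twoHomotopy (φ ψ : twoTermComplex d ⟶ twoTermComplex d) (s : B ⟶ A)
    (hc0 : eqToHom (twoObj_zero A B).symm ≫ φ.f 0 ≫ eqToHom (twoObj_zero A B) =
      d ≫ s + eqToHom (twoObj_zero A B).symm ≫ ψ.f 0 ≫ eqToHom (twoObj_zero A B))
    (hc1 : eqToHom (twoObj_one A B).symm ≫ φ.f 1 ≫ eqToHom (twoObj_one A B) =
      s ≫ d + eqToHom (twoObj_one A B).symm ≫ ψ.f 1 ≫ eqToHom (twoObj_one A B)) :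
    Homotopy φ ψ where
  hom := tHom d s
  zero i j hij := by
    apply tHom_ne
    rintro ⟨rfl, rfl⟩
    exact hij rfl
  comm i := by
    rcases eq_or_ne i 0 with rfl | hi0
    · rw [dNext_eq (tHom d s) (show (ComplexShape.up ℤ).Rel 0 1 by simp),
        prevD_eq (tHom d s) (show (ComplexShape.up ℤ).Rel (-1) 0 by simp),
        tHom_one_zero, tHom_ne d s (by norm_num), twoTermComplex_d01, zero_comp, add_zero]
      have h := congrArg
        (fun t => eqToHom (twoObj_zero A B) ≫ t ≫ eqToHom (twoObj_zero A B).symm) hc0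
      simp only [Preadditive.comp_add, Preadditive.add_comp, Category.assoc,
        eqToHom_trans, eqToHom_refl, Category.comp_id, Category.id_comp,
        eqToHom_trans_assoc] at h
      exact h0_aux d (twoObj_zero A B) (twoObj_one A B) _ _ s hc0
    · rcases eq_or_ne i 1 with rfl | hi1
      · rw [dNext_eq (tHom d s) (show (ComplexShape.up ℤ).Rel 1 2 by simp),
          prevD_eq (tHom d s) (show (ComplexShape.up ℤ).Rel 0 1 by simp),
          tHom_one_zero, tHom_ne d s (by norm_num), twoTermComplex_d01,
          twoTermComplex_d_eq_zero d (by norm_num), comp_zero, zero_add]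
        have h := congrArg
          (fun t => eqToHom (twoObj_one A B) ≫ t ≫ eqToHom (twoObj_one A B).symm) hc1
        simp only [Preadditive.comp_add, Preadditive.add_comp, Category.assoc,
          eqToHom_trans, eqToHom_refl, Category.comp_id, Category.id_comp,
          eqToHom_trans_assoc] at h
        exact h1_aux d (twoObj_zero A B) (twoObj_one A B) _ _ s hc1
      · rw [dNext_eq (tHom d s) (show (ComplexShape.up ℤ).Rel i (i+1) by simp),
          prevD_eq (tHom d s) (show (ComplexShape.up ℤ).Rel (i-1) i by simp),
          tHom_ne d s (by rintro ⟨h1, h0⟩; exact hi0 h0),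
          tHom_ne d s (by rintro ⟨h1, h0⟩; exact hi1 h1), comp_zero, zero_comp,
          add_zero, zero_add]
        exact (twoObj_isZero A B i hi0 hi1).eq_of_src _ _

end TwoTerm

section Tri

variable {T : Type u} [Category.{v} T] [Preadditive T] [HasZeroObject T]
    [HasShift T ℤ] [∀ n : ℤ, (shiftFunctor T n).Additive] [Pretriangulated T]
    [HasBinaryBiproducts T]
    {M X M₁ Y : T} {f : X ⟶ M₁} {g : M₁ ⟶ Y} {h : Y ⟶ X⟦(1 : ℤ)⟧}

theorem st7_fg (hT : Triangle.mk f g h ∈ distTriang T) : f ≫ g = 0 :=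
  comp_distTriang_mor_zero₁₂ _ hT

/-- cancellation of `g` on objects with no maps from `X⟦1⟧` -/
theorem st7_cancel (hT : Triangle.mk f g h ∈ distTriang T)
    (hXY : ∀ φ : (X⟦(1 : ℤ)⟧ : T) ⟶ Y, φ = 0)
    (hXM : ∀ φ : (X⟦(1 : ℤ)⟧ : T) ⟶ M, φ = 0)
    (q : Y ⟶ M ⊞ Y) (hq : g ≫ q = 0) : q = 0 := by
  obtain ⟨u, hu⟩ := Triangle.yoneda_exact₃ _ hT q hq
  have hu0 : u = 0 := by
    apply biprod.hom_ext
    · rw [zero_comp]; exact hXM _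
    · rw [zero_comp]; exact hXY _
  rw [hu, hu0, comp_zero]
  rfl

theorem st7_uniq (hT : Triangle.mk f g h ∈ distTriang T)
    (hXY : ∀ φ : (X⟦(1 : ℤ)⟧ : T) ⟶ Y, φ = 0)
    (hXM : ∀ φ : (X⟦(1 : ℤ)⟧ : T) ⟶ M, φ = 0)
    (β β' : M ⊞ Y ⟶ M ⊞ Y)
    (hβ : biprod.map (𝟙 M) g ≫ β = biprod.map (𝟙 M) g ≫ β') : β = β' := by
  apply biprod.hom_ext'
  · have := biprod.inl ≫= hβ
    simpa using this
  · have h2 : g ≫ (biprod.inr ≫ β - biprod.inr ≫ β') = 0 := by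
      have := biprod.inr ≫= hβ
      simp only [biprod.inr_map_assoc, Category.assoc] at this
      rw [Preadditive.comp_sub]
      rw [← Category.assoc, ← Category.assoc] at this ⊢
      rw [this, sub_self]
    have := st7_cancel hT hXY hXM _ h2
    rw [sub_eq_zero] at this
    exact this

theorem st7_exists (hT : Triangle.mk f g h ∈ distTriang T)
    (α : M ⊞ M₁ ⟶ M ⊞ M₁) (α₀ : X ⟶ X)
    (hc : biprod.lift (0 : X ⟶ M) f ≫ α = α₀ ≫ biprod.lift (0 : X ⟶ M) f) :
    ∃ β : M ⊞ Y ⟶ M ⊞ Y,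
      α ≫ biprod.map (𝟙 M) g = biprod.map (𝟙 M) g ≫ β := by
  have hdf : biprod.lift (0 : X ⟶ M) f = f ≫ biprod.inr := by ext <;> simp
  have hc1 : f ≫ biprod.inr ≫ α ≫ biprod.fst = 0 := by
    have := hc =≫ biprod.fst
    rw [hdf] at this
    simpa using this
  have hc2 : f ≫ biprod.inr ≫ α ≫ biprod.snd = α₀ ≫ f := by
    have := hc =≫ biprod.snd
    rw [hdf] at this
    simpa using this
  obtain ⟨c', hc'⟩ : ∃ c' : Y ⟶ M, biprod.inr ≫ α ≫ biprod.fst = g ≫ c' :=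
    Triangle.yoneda_exact₂ _ hT (biprod.inr ≫ α ≫ biprod.fst) hc1
  have hz : (f ≫ biprod.inr ≫ α ≫ biprod.snd) ≫ g = 0 := by
    rw [hc2, Category.assoc, st7_fg hT, comp_zero]
  obtain ⟨t, ht⟩ : ∃ t : Y ⟶ Y, (biprod.inr ≫ α ≫ biprod.snd) ≫ g = g ≫ t :=
    Triangle.yoneda_exact₂ _ hT ((biprod.inr ≫ α ≫ biprod.snd) ≫ g)
      ((Category.assoc _ _ _).symm.trans hz)
  refine ⟨biprod.desc (biprod.lift (biprod.inl ≫ α ≫ biprod.fst)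
      (biprod.inl ≫ α ≫ biprod.snd ≫ g)) (biprod.lift c' t), ?_⟩
  apply biprod.hom_ext'
  · apply biprod.hom_ext <;> simp
  · apply biprod.hom_ext
    · simpa using hc'
    · simpa using ht

end Tri

section Conj

variable {C : Type u} [Category.{v} C] [Preadditive C] [HasZeroObject C]
variable {A B : C} (d : A ⟶ B)

/-- component of a chain endomorphism in degree 0, as endomorphism of `A` -/
noncomputable def conj0 (φ : twoTermComplex d ⟶ twoTermComplex d) : A ⟶ A :=
  eqToHom (twoObj_zero A B).symm ≫ φ.f 0 ≫ eqToHom (twoObj_zero A B)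

/-- component of a chain endomorphism in degree 1, as endomorphism of `B` -/
noncomputable def conj1 (φ : twoTermComplex d ⟶ twoTermComplex d) : B ⟶ B :=
  eqToHom (twoObj_one A B).symm ≫ φ.f 1 ≫ eqToHom (twoObj_one A B)

theorem conj_square (φ : twoTermComplex d ⟶ twoTermComplex d) :
    conj0 d φ ≫ d = d ≫ conj1 d φ := twoHom_square d φ

theorem conj1_id : conj1 d (𝟙 (twoTermComplex d)) = 𝟙 B := by
  simp only [conj1, HomologicalComplex.id_f, Category.id_comp, eqToHom_trans, eqToHom_refl]
  exact eqc_id _ _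

theorem conj1_add (φ ψ : twoTermComplex d ⟶ twoTermComplex d) :
    conj1 d (φ + ψ) = conj1 d φ + conj1 d ψ := by
  simp [conj1]
  exact eqc_add _ _ _ _

theorem conj1_comp (φ ψ : twoTermComplex d ⟶ twoTermComplex d) :
    conj1 d (φ ≫ ψ) = conj1 d φ ≫ conj1 d ψ := by
  simp [conj1]
  exact eqc_comp _ _ _ _

theorem conj1_twoHom (u : A ⟶ A) (v : B ⟶ B) (huv : u ≫ d = d ≫ v) :
    conj1 d (twoHom d u v huv) = v := by
  simp [conj1, twoHom_f1]
  exact eqc_inv _ _ _ _ _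

theorem homotopy_data (φ ψ : twoTermComplex d ⟶ twoTermComplex d) (H : Homotopy φ ψ) :
    ∃ s : B ⟶ A, conj0 d φ = d ≫ s + conj0 d ψ ∧ conj1 d φ = s ≫ d + conj1 d ψ := by
  refine ⟨eqToHom (twoObj_one A B).symm ≫ H.hom 1 0 ≫ eqToHom (twoObj_zero A B), ?_, ?_⟩
  · have hc := H.comm 0
    rw [dNext_eq H.hom (show (ComplexShape.up ℤ).Rel 0 1 by simp),
      prevD_eq H.hom (show (ComplexShape.up ℤ).Rel (-1) 0 by simp),
      twoTermComplex_d_eq_zero d (by norm_num : ¬ ((-1 : ℤ) = 0 ∧ (0 : ℤ) = 1)),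
      comp_zero, add_zero, twoTermComplex_d01] at hc
    rw [conj0, conj0, hc]
    exact hd0_aux d (twoObj_zero A B) (twoObj_one A B) _ _
  · have hc := H.comm 1
    rw [dNext_eq H.hom (show (ComplexShape.up ℤ).Rel 1 2 by simp),
      prevD_eq H.hom (show (ComplexShape.up ℤ).Rel 0 1 by simp),
      twoTermComplex_d_eq_zero d (by norm_num : ¬ ((1 : ℤ) = 0 ∧ (2 : ℤ) = 1)),
      zero_comp, zero_add, twoTermComplex_d01] at hc
    rw [conj1, conj1, hc]
    exact hd1_aux d (twoObj_zero A B) (twoObj_one A B) _ _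

end Conj

section Tri2

variable {T : Type u} [Category.{v} T] [Preadditive T] [HasZeroObject T]
    [HasShift T ℤ] [∀ n : ℤ, (shiftFunctor T n).Additive] [Pretriangulated T]
    [HasBinaryBiproducts T]
    {M X M₁ Y : T} {f : X ⟶ M₁} {g : M₁ ⟶ Y} {h : Y ⟶ X⟦(1 : ℤ)⟧}

theorem st7_w_zero (hXY : ∀ φ : (X⟦(1 : ℤ)⟧ : T) ⟶ Y, φ = 0)
    (w : X ⟶ (Y⟦(-1 : ℤ)⟧ : T)) : w = 0 := by
  apply (shiftFunctor T (1 : ℤ)).map_injective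
  have h0 : (shiftFunctor T (1 : ℤ)).map w ≫ ((shiftEquiv T (1 : ℤ)).counitIso.hom.app Y) = 0 :=
    hXY _
  rw [Functor.map_zero]
  have h2 := h0 =≫ ((shiftEquiv T (1 : ℤ)).counitIso.inv.app Y)
  exact (cancel_mono ((shiftEquiv T (1 : ℤ)).counitIso.hom.app Y)).1 (h0.trans zero_comp.symm)

theorem st7_e_zero (hT : Triangle.mk f g h ∈ distTriang T)
    (hXY : ∀ φ : (X⟦(1 : ℤ)⟧ : T) ⟶ Y, φ = 0)
    (e : X ⟶ X) (he : e ≫ f = 0) : e = 0 := by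
  obtain ⟨w, hw⟩ := Triangle.coyoneda_exact₂ _ (inv_rot_of_distTriang _ hT) e he
  rw [hw, st7_w_zero hXY w]
  exact zero_comp

theorem st7_homotopy_core (hT : Triangle.mk f g h ∈ distTriang T)
    (hXY : ∀ φ : (X⟦(1 : ℤ)⟧ : T) ⟶ Y, φ = 0)
    (γ1 : M ⊞ M₁ ⟶ M ⊞ M₁) (γ0 : X ⟶ X)
    (hγg : γ1 ≫ biprod.map (𝟙 M) g = 0)
    (hsq : γ0 ≫ biprod.lift (0 : X ⟶ M) f = biprod.lift (0 : X ⟶ M) f ≫ γ1) :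
    ∃ s : M ⊞ M₁ ⟶ X, γ0 = biprod.lift (0 : X ⟶ M) f ≫ s ∧
      γ1 = s ≫ biprod.lift (0 : X ⟶ M) f := by
  have hfst : γ1 ≫ biprod.fst = 0 := by
    have h2 := hγg =≫ biprod.fst
    simpa using h2
  have hbl : (biprod.inl ≫ γ1 ≫ biprod.snd) ≫ g = 0 := by
    have h2 := biprod.inl ≫= hγg =≫ biprod.snd
    simpa using h2
  have hdl : (biprod.inr ≫ γ1 ≫ biprod.snd) ≫ g = 0 := by
    have h2 := biprod.inr ≫= hγg =≫ biprod.snd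
    simpa using h2
  obtain ⟨b', hb'⟩ : ∃ b' : M ⟶ X, biprod.inl ≫ γ1 ≫ biprod.snd = b' ≫ f :=
    Triangle.coyoneda_exact₂ _ hT (biprod.inl ≫ γ1 ≫ biprod.snd) hbl
  obtain ⟨d', hd'⟩ : ∃ d' : M₁ ⟶ X, biprod.inr ≫ γ1 ≫ biprod.snd = d' ≫ f :=
    Triangle.coyoneda_exact₂ _ hT (biprod.inr ≫ γ1 ≫ biprod.snd) hdl
  have hdf : biprod.lift (0 : X ⟶ M) f = f ≫ biprod.inr := by ext <;> simp
  have hγ0 : γ0 = f ≫ d' := by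
    have h2 := hsq =≫ biprod.snd
    rw [hdf] at h2
    simp only [Category.assoc, biprod.lift_snd, biprod.inr_snd, Category.comp_id] at h2
    rw [hd'] at h2
    have h3 : (γ0 - f ≫ d') ≫ f = 0 := by
      rw [Preadditive.sub_comp, h2]
      simp
    have := st7_e_zero hT hXY _ h3
    rw [sub_eq_zero] at this
    exact this
  refine ⟨biprod.desc b' d', ?_, ?_⟩
  · rw [hdf, Category.assoc, biprod.inr_desc, hγ0]
  · apply biprod.hom_ext'
    · apply biprod.hom_ext
      · simpa using biprod.inl ≫= hfst
      · simpa using hb'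
    · apply biprod.hom_ext
      · simpa using biprod.inr ≫= hfst
      · simpa using hd'

theorem st7_mem (α : M ⊞ M₁ ⟶ M ⊞ M₁) (β : M ⊞ Y ⟶ M ⊞ Y)
    (hαβ : α ≫ biprod.map (𝟙 M) g = biprod.map (𝟙 M) g ≫ β) :
    (∃ t' : M₁ ⟶ M₁, g ≫ (biprod.inr ≫ β ≫ biprod.snd) = t' ≫ g) ∧
      (∃ s : M ⟶ M₁, biprod.inl ≫ β ≫ biprod.snd = s ≫ g) := by
  constructor
  · refine ⟨biprod.inr ≫ α ≫ biprod.snd, ?_⟩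
    have h2 := biprod.inr ≫= hαβ =≫ biprod.snd
    simp only [Category.assoc, biprod.inr_map_assoc, biprod.map_snd] at h2
    simpa using h2.symm
  · refine ⟨biprod.inl ≫ α ≫ biprod.snd, ?_⟩
    have h2 := biprod.inl ≫= hαβ =≫ biprod.snd
    simp only [Category.assoc, biprod.inl_map_assoc, biprod.map_snd, Category.id_comp] at h2
    simpa using h2.symm

theorem st7_surj (hT : Triangle.mk f g h ∈ distTriang T)
    (β : M ⊞ Y ⟶ M ⊞ Y) (t' : M₁ ⟶ M₁) (s : M ⟶ M₁)
    (ht' : g ≫ (biprod.inr ≫ β ≫ biprod.snd) = t' ≫ g)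
    (hs : biprod.inl ≫ β ≫ biprod.snd = s ≫ g) :
    ∃ (α : M ⊞ M₁ ⟶ M ⊞ M₁) (α₀ : X ⟶ X),
      α₀ ≫ biprod.lift (0 : X ⟶ M) f = biprod.lift (0 : X ⟶ M) f ≫ α ∧
      α ≫ biprod.map (𝟙 M) g = biprod.map (𝟙 M) g ≫ β := by
  have hfg : f ≫ g = 0 := st7_fg hT
  have hft' : (f ≫ t') ≫ g = 0 := by
    rw [Category.assoc, ← ht', ← Category.assoc, hfg, zero_comp]
  obtain ⟨α₀, hα₀⟩ : ∃ α₀ : X ⟶ X, f ≫ t' = α₀ ≫ f :=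
    Triangle.coyoneda_exact₂ _ hT (f ≫ t') hft'
  refine ⟨biprod.desc (biprod.lift (biprod.inl ≫ β ≫ biprod.fst) s)
    (biprod.lift (g ≫ (biprod.inr ≫ β ≫ biprod.fst)) t'), α₀, ?_, ?_⟩
  · have hdf : biprod.lift (0 : X ⟶ M) f = f ≫ biprod.inr := by ext <;> simp
    rw [hdf]
    apply biprod.hom_ext
    · simp [reassoc_of% hfg]
    · simpa using hα₀.symm
  · apply biprod.hom_ext'
    · apply biprod.hom_ext
      · simp
      · simpa using hs.symm
    · apply biprod.hom_ext
      · simp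
      · simpa using ht'.symm
end Tri2

/-- Lemma 2.5 of the paper for `n = 3`, `Φ = {0}`. -/
theorem statement7 {T : Type u} [Category.{v} T] [Preadditive T] [HasZeroObject T]
    [HasShift T ℤ] [∀ n : ℤ, (shiftFunctor T n).Additive] [Pretriangulated T]
    [HasBinaryBiproducts T]
    (M X M₁ Y : T) (f : X ⟶ M₁) (g : M₁ ⟶ Y) (h : Y ⟶ X⟦(1 : ℤ)⟧)
    (hT : Triangle.mk f g h ∈ distTriang T)
    (hXY : ∀ φ : (X⟦(1 : ℤ)⟧ : T) ⟶ Y, φ = 0)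
    (hXM : ∀ φ : (X⟦(1 : ℤ)⟧ : T) ⟶ M, φ = 0)
    (B : Set (M ⊞ Y ⟶ M ⊞ Y))
    (hB : B = {ψ | (∃ t' : M₁ ⟶ M₁, g ≫ (biprod.inr ≫ ψ ≫ biprod.snd) = t' ≫ g) ∧
        (∃ s : M ⟶ M₁, biprod.inl ≫ ψ ≫ biprod.snd = s ≫ g)})
    (P : CochainComplex T ℤ) (hP : P = twoTermComplex (biprod.lift (0 : X ⟶ M) f))
    (h1 : P.X 1 = (M ⊞ M₁)) :
    ∃ Θ : ((HomotopyCategory.quotient T (ComplexShape.up ℤ)).obj P ⟶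
        (HomotopyCategory.quotient T (ComplexShape.up ℤ)).obj P) → (M ⊞ Y ⟶ M ⊞ Y),
      Function.Injective Θ ∧ Set.range Θ = B ∧
      Θ (𝟙 _) = 𝟙 (M ⊞ Y) ∧
      (∀ x y, Θ (x + y) = Θ x + Θ y) ∧
      (∀ x y, Θ (x ≫ y) = Θ x ≫ Θ y) ∧
      (∀ φ : P ⟶ P,
        (eqToHom h1.symm ≫ φ.f 1 ≫ eqToHom h1) ≫ biprod.map (𝟙 M) g =
          biprod.map (𝟙 M) g ≫ Θ ((HomotopyCategory.quotient T (ComplexShape.up ℤ)).map φ)) := by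
  subst hP
  set D : X ⟶ M ⊞ M₁ := biprod.lift (0 : X ⟶ M) f with hD
  have hDg : D ≫ biprod.map (𝟙 M) g = 0 := by
    apply biprod.hom_ext <;> simp [hD, st7_fg hT]
  -- existence of β for every chain endomorphism
  have key : ∀ φ : twoTermComplex D ⟶ twoTermComplex D,
      ∃ β : M ⊞ Y ⟶ M ⊞ Y,
        conj1 D φ ≫ biprod.map (𝟙 M) g = biprod.map (𝟙 M) g ≫ β := fun φ =>
    st7_exists hT (conj1 D φ) (conj0 D φ) (conj_square D φ).symm
  choose θ hθ using key
  have char : ∀ (φ : twoTermComplex D ⟶ twoTermComplex D) (β : M ⊞ Y ⟶ M ⊞ Y),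
      conj1 D φ ≫ biprod.map (𝟙 M) g = biprod.map (𝟙 M) g ≫ β → θ φ = β :=
    fun φ β hb => st7_uniq hT hXY hXM _ _ ((hθ φ).symm.trans hb)
  -- homotopy invariance
  have hwd : ∀ φ ψ : twoTermComplex D ⟶ twoTermComplex D,
      (HomotopyCategory.quotient T (ComplexShape.up ℤ)).map φ =
        (HomotopyCategory.quotient T (ComplexShape.up ℤ)).map ψ → θ φ = θ ψ := by
    intro φ ψ he
    obtain ⟨s, _, hs1⟩ := homotopy_data D φ ψ (HomotopyCategory.homotopyOfEq _ _ he)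
    apply char
    rw [hs1, Preadditive.add_comp, Category.assoc, hDg, comp_zero, zero_add, hθ ψ]
  refine ⟨fun x => θ ((HomotopyCategory.quotient T (ComplexShape.up ℤ)).preimage x),
    ?_, ?_, ?_, ?_, ?_, ?_⟩
  · -- injectivity
    intro x y hxy
    set φ := (HomotopyCategory.quotient T (ComplexShape.up ℤ)).preimage x with hφ
    set ψ := (HomotopyCategory.quotient T (ComplexShape.up ℤ)).preimage y with hψ
    have e2 : θ φ = θ ψ := hxy
    have e1 : conj1 D φ ≫ biprod.map (𝟙 M) g = conj1 D ψ ≫ biprod.map (𝟙 M) g := by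
      rw [hθ φ, hθ ψ, e2]
    have hγg : (conj1 D φ - conj1 D ψ) ≫ biprod.map (𝟙 M) g = 0 := by
      rw [Preadditive.sub_comp, e1, sub_self]
    have hsq : (conj0 D φ - conj0 D ψ) ≫ D = D ≫ (conj1 D φ - conj1 D ψ) := by
      rw [Preadditive.sub_comp, Preadditive.comp_sub, conj_square, conj_square]
    obtain ⟨s, hs0, hs1⟩ := st7_homotopy_core hT hXY _ _ hγg hsq
    have H : Homotopy φ ψ := by
      refine twoHomotopy D φ ψ s ?_ ?_
      · have : conj0 D φ = D ≫ s + conj0 D ψ := by rw [← hs0]; abel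
        exact this
      · have : conj1 D φ = s ≫ D + conj1 D ψ := by rw [← hs1]; abel
        exact this
    calc x = (HomotopyCategory.quotient T (ComplexShape.up ℤ)).map φ :=
            ((HomotopyCategory.quotient T (ComplexShape.up ℤ)).map_preimage x).symm
      _ = (HomotopyCategory.quotient T (ComplexShape.up ℤ)).map ψ :=
            HomotopyCategory.eq_of_homotopy _ _ H
      _ = y := (HomotopyCategory.quotient T (ComplexShape.up ℤ)).map_preimage y
  · -- range
    ext β
    constructor
    · rintro ⟨x, rfl⟩
      rw [hB]
      exact st7_mem (conj1 D _) _
        (hθ ((HomotopyCategory.quotient T (ComplexShape.up ℤ)).preimage x))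
    · intro hβ
      rw [hB] at hβ
      obtain ⟨⟨t', ht'⟩, ⟨s, hs⟩⟩ := hβ
      obtain ⟨α, α₀, hsq, hαβ⟩ := st7_surj hT β t' s ht' hs
      refine ⟨(HomotopyCategory.quotient T (ComplexShape.up ℤ)).map (twoHom D α₀ α hsq), ?_⟩
      beta_reduce
      rw [hwd _ _ ((HomotopyCategory.quotient T (ComplexShape.up ℤ)).map_preimage _)]
      apply char
      rw [conj1_twoHom]
      exact hαβ
  · -- identity
    beta_reduce
    rw [show 𝟙 ((HomotopyCategory.quotient T (ComplexShape.up ℤ)).obj (twoTermComplex D)) =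
        (HomotopyCategory.quotient T (ComplexShape.up ℤ)).map (𝟙 _) by
      rw [CategoryTheory.Functor.map_id]]
    rw [hwd _ _ ((HomotopyCategory.quotient T (ComplexShape.up ℤ)).map_preimage _)]
    apply char
    rw [conj1_id]
    simp
  · -- additivity
    intro x y
    have hx := (HomotopyCategory.quotient T (ComplexShape.up ℤ)).map_preimage x
    have hy := (HomotopyCategory.quotient T (ComplexShape.up ℤ)).map_preimage y
    rw [show x + y = (HomotopyCategory.quotient T (ComplexShape.up ℤ)).map
        ((HomotopyCategory.quotient T (ComplexShape.up ℤ)).preimage x +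
         (HomotopyCategory.quotient T (ComplexShape.up ℤ)).preimage y) by
      rw [Functor.map_add, hx, hy]]
    beta_reduce
    rw [hwd _ _ ((HomotopyCategory.quotient T (ComplexShape.up ℤ)).map_preimage _)]
    apply char
    rw [conj1_add, Preadditive.add_comp, hθ, hθ, ← Preadditive.comp_add]
  · -- multiplicativity
    intro x y
    have hx := (HomotopyCategory.quotient T (ComplexShape.up ℤ)).map_preimage x
    have hy := (HomotopyCategory.quotient T (ComplexShape.up ℤ)).map_preimage y
    rw [show x ≫ y = (HomotopyCategory.quotient T (ComplexShape.up ℤ)).map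
        ((HomotopyCategory.quotient T (ComplexShape.up ℤ)).preimage x ≫
         (HomotopyCategory.quotient T (ComplexShape.up ℤ)).preimage y) by
      rw [Functor.map_comp, hx, hy]]
    beta_reduce
    rw [hwd _ _ ((HomotopyCategory.quotient T (ComplexShape.up ℤ)).map_preimage _)]
    apply char
    rw [conj1_comp, Category.assoc, hθ, ← Category.assoc, hθ, Category.assoc]
  · -- compatibility
    intro φ
    beta_reduce
    rw [hwd _ _ ((HomotopyCategory.quotient T (ComplexShape.up ℤ)).map_preimage _)]
    exact hθ φ
end

section
/- Let C be an additive category and W an object of C, with Γ := End_C(W) the endomorphism ring of W. Then the functor sending an object (Z, p) of the Karoubi envelope of add(W) to the Γ-module Hom((W, 1_W), (Z, p)) = {t : W ⟶ Z | t ≫ p = t} (with Γ acting by composition) is an equivalence of additive categories between the Karoubi envelope (idempotent completion) of add(W) and the category of finitely generated projective Γ-modules. -/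
open CategoryTheory CategoryTheory.Limits CategoryTheory.Idempotents Opposite

universe v u

variable {C : Type u} [Category.{v} C] [Preadditive C] [HasFiniteBiproducts C]

/-- For objects `W Z : C`, the abelian group `Hom(W, Z)` is a module over the
endomorphism ring `Γ = End W` with multiplication given by left-to-right
composition (i.e. `End (op W)`), the action beingによって precomposition:
`γ • t = γ ≫ t`. This is Mathlib's `CategoryTheory.moduleEndLeft`. -/
instance homModuleEnd (W Z : C) : Module (End (op W)) (W ⟶ Z) where
  smul γ t := γ.unop ≫ t
  one_smul t := Category.id_comp t
  mul_smul γ δ t := Category.assoc _ _ _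
  smul_add γ a b := Preadditive.comp_add _ _ _ _ _ _
  smul_zero γ := Limits.comp_zero
  add_smul γ δ t := Preadditive.add_comp _ _ _ _ _ _
  zero_smul t := Limits.zero_comp

/-- `add W`: the full subcategory of `C` whose objects are the direct summands of
finite direct sums of copies of `W`. -/
abbrev AddCat (W : C) :=
  ObjectProperty.FullSubcategory (fun Z : C =>
    ∃ (n : ℕ) (s : Z ⟶ ⨁ fun _ : Fin n => W) (r : (⨁ fun _ : Fin n => W) ⟶ Z), s ≫ r = 𝟙 Z)

/-- For an object `(Z, p)` of the Karoubi envelope of `add W`, the set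
`{t : W ⟶ Z | t ≫ p = t}` is a submodule of `Hom(W, Z)` over the endomorphism
ring `Γ = End W`, acting by composition. -/
def karoubiHomSubmodule (W : C) (P : Karoubi (AddCat W)) :
    Submodule (End (op W)) (W ⟶ P.X.obj) where
  carrier := {t | t ≫ (ObjectProperty.ι _).map P.p = t}
  add_mem' := fun {a b} ha hb => by
    simp only [Set.mem_setOf_eq] at ha hb ⊢
    rw [Preadditive.add_comp, ha, hb]
  zero_mem' := by simp
  smul_mem' := fun γ t ht => by
    simp only [Set.mem_setOf_eq] at ht ⊢
    show (γ.unop ≫ t) ≫ _ = γ.unop ≫ t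
    rw [Category.assoc, ht]

/-- The functor from the Karoubi envelope (idempotent completion) of `add W` to
`Γ`-modules, `Γ := End W`, sending `(Z, p)` to `Hom((W, 1_W), (Z, p)) =
{t : W ⟶ Z | t ≫ p = t}` with `Γ` acting by composition. -/
noncomputable def karoubiHomFunctor (W : C) :
    Karoubi (AddCat W) ⥤ ModuleCat.{v} (End (op W)) where
  obj P := ModuleCat.of _ (karoubiHomSubmodule W P)
  map {P Q} φ := ModuleCat.ofHom
    { toFun := fun t => ⟨t.1 ≫ (ObjectProperty.ι _).map φ.f, by
          have h : φ.f ≫ Q.p = φ.f := Karoubi.comp_p φ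
          show (_ ≫ _) ≫ _ = _
          rw [Category.assoc, ← Functor.map_comp, h]⟩
      map_add' := fun a b => Subtype.ext (by
        show (a.1 + b.1) ≫ _ = a.1 ≫ _ + b.1 ≫ _
        rw [Preadditive.add_comp])
      map_smul' := fun γ t => Subtype.ext (by
        show (γ.unop ≫ t.1) ≫ _ = γ.unop ≫ (t.1 ≫ _)
        rw [Category.assoc]) }
  map_id P := ModuleCat.hom_ext (LinearMap.ext (fun t => Subtype.ext (by
    show t.1 ≫ _ = t.1
    exact t.2)))
  map_comp {P Q R} φ ψ := ModuleCat.hom_ext (LinearMap.ext (fun t => Subtype.ext (by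
    show t.1 ≫ _ = (t.1 ≫ _) ≫ _
    rw [Karoubi.comp_f, Functor.map_comp, Category.assoc])))


section Aux

variable (W : C)

omit [Preadditive C] [HasFiniteBiproducts C] in
lemma endMul_unop (γ δ : End (op W)) : (γ * δ).unop = γ.unop ≫ δ.unop := rfl

/-- The linear equivalence `Hom(W, W^n) ≃ Γ^n`. -/
noncomputable def eps (n : ℕ) :
    (W ⟶ ⨁ fun _ : Fin n => W) ≃ₗ[End (op W)] (Fin n → End (op W)) where
  toFun t := fun i => (t ≫ biproduct.π _ i).op
  map_add' a b := funext fun i => by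
    simp [Preadditive.add_comp]
  map_smul' γ t := funext fun i => by
    simp only [RingHom.id_apply, Pi.smul_apply, smul_eq_mul]
    apply Quiver.Hom.unop_inj
    rw [endMul_unop, Quiver.Hom.unop_op, Quiver.Hom.unop_op]
    exact Category.assoc _ _ _
  invFun c := ∑ i, (c i).unop ≫ biproduct.ι (fun _ : Fin n => W) i
  left_inv t := by
    simp only [Quiver.Hom.unop_op]
    calc ∑ i, (t ≫ biproduct.π _ i) ≫ biproduct.ι (fun _ : Fin n => W) i
        = t ≫ ∑ i, biproduct.π _ i ≫ biproduct.ι (fun _ : Fin n => W) i := by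
          rw [Preadditive.comp_sum]; simp only [Category.assoc]
      _ = t := by rw [biproduct.total, Category.comp_id]
  right_inv c := funext fun i => by
    show ((∑ j, (c j).unop ≫ biproduct.ι (fun _ : Fin n => W) j) ≫ biproduct.π _ i).op = c i
    rw [Preadditive.sum_comp]
    simp only [Category.assoc, biproduct.ι_π]
    rw [Finset.sum_eq_single i]
    · simp
    · intro j _ hj; rw [dif_neg hj]; simp
    · intro h; exact absurd (Finset.mem_univ i) h

lemma eps_apply (n : ℕ) (t : W ⟶ ⨁ fun _ : Fin n => W) (i : Fin n) :
    eps W n t i = (t ≫ biproduct.π _ i).op := rfl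

lemma eps_symm_apply (n : ℕ) (c : Fin n → End (op W)) :
    (eps W n).symm c = ∑ i, (c i).unop ≫ biproduct.ι (fun _ : Fin n => W) i := rfl

lemma sum_dec (n : ℕ) (u : W ⟶ ⨁ fun _ : Fin n => W) :
    ∑ i, (u ≫ biproduct.π (fun _ : Fin n => W) i) ≫ biproduct.ι (fun _ : Fin n => W) i = u := by
  calc ∑ i, (u ≫ biproduct.π _ i) ≫ biproduct.ι (fun _ : Fin n => W) i
      = u ≫ ∑ i, biproduct.π _ i ≫ biproduct.ι (fun _ : Fin n => W) i := by
        rw [Preadditive.comp_sum]; simp only [Category.assoc]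
    _ = u := by rw [biproduct.total, Category.comp_id]

end Aux

set_option maxHeartbeats 1000000 in
set_option synthInstance.maxHeartbeats 400000 in
/-- Lemma 2.4 of the paper. Let `C` be an additive category,
`W` an object of `C`, and `Γ := End W` (multiplication being left-to-right
composition, i.e. `End (op W)`). The functor sending an object `(Z, p)` of the
Karoubi envelope of `add W` to the `Γ`-module `{t : W ⟶ Z | t ≫ p = t}` is an
equivalence of additive categories from the Karoubi envelope of `add W` onto
the category of finitely generated projective `Γ`-modules: it is additive,
fully faithful, takes values in finitely generated projective modules, and
every finitely generated projective `Γ`-module is isomorphic to a value of it. -/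
theorem statement10 (W : C) :
    (karoubiHomFunctor W).Additive ∧
      (karoubiHomFunctor W).Full ∧ (karoubiHomFunctor W).Faithful ∧
      (∀ P : Karoubi (AddCat W),
        Module.Finite (End (op W)) ((karoubiHomFunctor W).obj P) ∧
          Module.Projective (End (op W)) ((karoubiHomFunctor W).obj P)) ∧
      (∀ N : ModuleCat.{v} (End (op W)), Module.Finite (End (op W)) N →
        Module.Projective (End (op W)) N →
          ∃ P : Karoubi (AddCat W), Nonempty ((karoubiHomFunctor W).obj P ≅ N)) := by
  refine ⟨⟨?_⟩, ⟨?_⟩, ⟨?_⟩, ?_, ?_⟩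
  · -- Additive
    intro P Q φ ψ
    apply ModuleCat.hom_ext; apply LinearMap.ext; intro t; apply Subtype.ext
    show t.1 ≫ (ObjectProperty.ι _).map (φ + ψ).f
      = t.1 ≫ (ObjectProperty.ι _).map φ.f + t.1 ≫ (ObjectProperty.ι _).map ψ.f
    show t.1 ≫ ((ObjectProperty.ι _).map φ.f + (ObjectProperty.ι _).map ψ.f) = _
    rw [Preadditive.comp_add]
  · -- Full
    intro P Q g
    obtain ⟨n, s, r, hsr⟩ := P.X.property
    have hpp : (ObjectProperty.ι _).map P.p ≫ (ObjectProperty.ι _).map P.p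
        = (ObjectProperty.ι _).map P.p := by
      rw [← Functor.map_comp, P.idem]
    set pp := (ObjectProperty.ι (fun Z : C =>
      ∃ (n : ℕ) (s : Z ⟶ ⨁ fun _ : Fin n => W) (r : (⨁ fun _ : Fin n => W) ⟶ Z),
        s ≫ r = 𝟙 Z)).map P.p with hppdef
    have hmemti : ∀ i : Fin n,
        (biproduct.ι (fun _ : Fin n => W) i ≫ r ≫ pp) ∈ karoubiHomSubmodule W P := by
      intro i
      show (_ ≫ r ≫ pp) ≫ pp = _
      rw [Category.assoc, Category.assoc, hpp]
    let ti : Fin n → karoubiHomSubmodule W P := fun i => ⟨_, hmemti i⟩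
    let gQ : Fin n → karoubiHomSubmodule W Q := fun i => g.hom (ti i)
    let gt : Fin n → (W ⟶ Q.X.obj) := fun i => (gQ i).1
    have hgtmem : ∀ i, gt i ≫ (ObjectProperty.ι _).map Q.p = gt i := fun i => (gQ i).2
    let f0 : P.X.obj ⟶ Q.X.obj := pp ≫ s ≫ biproduct.desc gt
    have hf0Q : f0 ≫ (ObjectProperty.ι _).map Q.p = f0 := by
      show (pp ≫ s ≫ biproduct.desc gt) ≫ _ = _
      rw [Category.assoc, Category.assoc]
      congr 1
      congr 1
      apply biproduct.hom_ext'
      intro i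
      rw [← Category.assoc, biproduct.ι_desc, hgtmem i]
    have hpf0 : pp ≫ f0 = f0 := by
      show pp ≫ pp ≫ s ≫ biproduct.desc gt = _
      rw [← Category.assoc, hpp]
    have hcomm : f0 = pp ≫ f0 ≫ (ObjectProperty.ι _).map Q.p := by
      rw [hf0Q, hpf0]
    refine ⟨⟨ObjectProperty.homMk f0, by apply ObjectProperty.hom_ext; exact hcomm.symm⟩, ?_⟩
    apply ModuleCat.hom_ext; apply LinearMap.ext; intro t; apply Subtype.ext
    have ht : t.1 ≫ pp = t.1 := t.2
    let ci : Fin n → End (op W) := fun i => ((t.1 ≫ s) ≫ biproduct.π (fun _ : Fin n => W) i).op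
    have hdec1 : t.1 = ∑ i, (ci i).unop ≫ (ti i).1 := by
      calc t.1 = (t.1 ≫ s) ≫ r ≫ pp := by
            rw [← Category.assoc, Category.assoc t.1 s r, hsr, Category.comp_id, ht]
        _ = (∑ i, ((t.1 ≫ s) ≫ biproduct.π (fun _ : Fin n => W) i)
              ≫ biproduct.ι (fun _ : Fin n => W) i) ≫ r ≫ pp := by
            rw [sum_dec]
        _ = ∑ i, (ci i).unop ≫ (ti i).1 := by
            rw [Preadditive.sum_comp]
            refine Finset.sum_congr rfl fun i _ => ?_
            show (((t.1 ≫ s) ≫ biproduct.π _ i) ≫ biproduct.ι (fun _ : Fin n => W) i) ≫ r ≫ pp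
              = ((t.1 ≫ s) ≫ biproduct.π (fun _ : Fin n => W) i)
                  ≫ (biproduct.ι (fun _ : Fin n => W) i ≫ r ≫ pp)
            simp only [Category.assoc]
    have hdec : (t : karoubiHomSubmodule W P) = ∑ i, ci i • ti i := by
      apply Subtype.ext
      rw [Submodule.coe_sum, hdec1]
      exact Finset.sum_congr rfl fun i _ => rfl
    have hg : (g.hom t : karoubiHomSubmodule W Q) = ∑ i, ci i • gQ i := by
      show g.hom t = _
      exact (congrArg g.hom hdec).trans ((map_sum g.hom _ _).trans
        (Finset.sum_congr rfl fun i _ => map_smul g.hom _ _))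
    show t.1 ≫ f0 = _
    rw [show (Subtype.val (g.hom t) : W ⟶ Q.X.obj) = ∑ i, (ci i).unop ≫ gt i from by
      rw [show Subtype.val (g.hom t) = ((∑ i, ci i • gQ i : karoubiHomSubmodule W Q) : W ⟶ Q.X.obj)
        from congrArg Subtype.val hg, Submodule.coe_sum]
      exact Finset.sum_congr rfl fun i _ => rfl]
    calc t.1 ≫ f0 = (t.1 ≫ s) ≫ biproduct.desc gt := by
          show t.1 ≫ pp ≫ s ≫ biproduct.desc gt = _
          rw [← Category.assoc, ht, Category.assoc]
      _ = ∑ i, (ci i).unop ≫ gt i := by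
          conv_lhs => rw [← sum_dec W n (t.1 ≫ s)]
          rw [Preadditive.sum_comp]
          refine Finset.sum_congr rfl fun i _ => ?_
          show (((t.1 ≫ s) ≫ biproduct.π _ i) ≫ biproduct.ι (fun _ : Fin n => W) i)
              ≫ biproduct.desc gt = _
          rw [Category.assoc, biproduct.ι_desc]
          rfl
  · -- Faithful
    intro P Q φ ψ h
    obtain ⟨n, s, r, hsr⟩ := P.X.property
    apply Karoubi.hom_ext
    have hmemti : ∀ i : Fin n,
        (biproduct.ι (fun _ : Fin n => W) i ≫ r ≫ (ObjectProperty.ι _).map P.p)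
          ∈ karoubiHomSubmodule W P := by
      intro i
      show (_ ≫ r ≫ _) ≫ _ = _
      rw [Category.assoc, Category.assoc, ← Functor.map_comp, P.idem]
    have key : ∀ t : karoubiHomSubmodule W P,
        t.1 ≫ (ObjectProperty.ι _).map φ.f
          = t.1 ≫ (ObjectProperty.ι _).map ψ.f := by
      intro t
      have := congrArg (fun k => ((k.hom t : karoubiHomSubmodule W Q) : W ⟶ Q.X.obj))
        (h : (karoubiHomFunctor W).map φ = (karoubiHomFunctor W).map ψ)
      exact this
    have h2 : (r ≫ (ObjectProperty.ι _).map P.p) ≫ (ObjectProperty.ι _).map φ.f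
        = (r ≫ (ObjectProperty.ι _).map P.p) ≫ (ObjectProperty.ι _).map ψ.f := by
      apply biproduct.hom_ext'
      intro i
      have := key ⟨_, hmemti i⟩
      simpa only [Category.assoc] using this
    have h3 : (ObjectProperty.ι _).map P.p ≫ (ObjectProperty.ι _).map φ.f
        = (ObjectProperty.ι _).map P.p ≫ (ObjectProperty.ι _).map ψ.f := by
      have := congrArg (fun k => s ≫ k) h2
      simpa only [← Category.assoc, hsr, Category.id_comp] using this
    have hφ : (ObjectProperty.ι _).map P.p ≫ (ObjectProperty.ι _).map φ.f
        = (ObjectProperty.ι _).map φ.f := by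
      rw [← Functor.map_comp, Karoubi.p_comp φ]
    have hψ : (ObjectProperty.ι _).map P.p ≫ (ObjectProperty.ι _).map ψ.f
        = (ObjectProperty.ι _).map ψ.f := by
      rw [← Functor.map_comp, Karoubi.p_comp ψ]
    have : (ObjectProperty.ι _).map φ.f = (ObjectProperty.ι _).map ψ.f := by
      rw [← hφ, ← hψ, h3]
    ext; exact this
  · -- fg projective values
    intro P
    obtain ⟨n, s, r, hsr⟩ := P.X.property
    have hpp : (ObjectProperty.ι _).map P.p ≫ (ObjectProperty.ι _).map P.p
        = (ObjectProperty.ι _).map P.p := by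
      rw [← Functor.map_comp, P.idem]
    let B : karoubiHomSubmodule W P →ₗ[End (op W)] (W ⟶ ⨁ fun _ : Fin n => W) :=
      { toFun := fun t => t.1 ≫ s
        map_add' := fun a b => Preadditive.add_comp _ _ _ _ _ _
        map_smul' := fun γ t => by
          show (γ.unop ≫ t.1) ≫ s = γ.unop ≫ (t.1 ≫ s)
          rw [Category.assoc] }
    let A : karoubiHomSubmodule W P →ₗ[End (op W)] (Fin n → End (op W)) :=
      (eps W n).toLinearMap.comp B
    let D : (W ⟶ ⨁ fun _ : Fin n => W) →ₗ[End (op W)] karoubiHomSubmodule W P :=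
      { toFun := fun u => ⟨u ≫ r ≫ (ObjectProperty.ι _).map P.p, by
          show (u ≫ r ≫ _) ≫ _ = _
          rw [Category.assoc, Category.assoc, hpp]⟩
        map_add' := fun a b => Subtype.ext (by
          show (a + b) ≫ _ = a ≫ _ + b ≫ _
          rw [Preadditive.add_comp])
        map_smul' := fun γ u => Subtype.ext (by
          show (γ.unop ≫ u) ≫ r ≫ _ = γ.unop ≫ (u ≫ r ≫ _)
          rw [Category.assoc]) }
    let S : (Fin n → End (op W)) →ₗ[End (op W)] karoubiHomSubmodule W P :=
      D.comp (eps W n).symm.toLinearMap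
    have hSA : S.comp A = LinearMap.id := by
      apply LinearMap.ext; intro t; apply Subtype.ext
      show ((eps W n).symm ((eps W n) (t.1 ≫ s))) ≫ r ≫ (ObjectProperty.ι _).map P.p
        = t.1
      rw [LinearEquiv.symm_apply_apply, ← Category.assoc, Category.assoc t.1 s r, hsr,
        Category.comp_id]
      exact t.2
    have hsurj : Function.Surjective S := fun t =>
      ⟨A t, by rw [← LinearMap.comp_apply, hSA, LinearMap.id_apply]⟩
    exact ⟨Module.Finite.of_surjective S hsurj, Module.Projective.of_split A S hSA⟩
  · -- essential surjectivity
    intro N hfin hproj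
    haveI := hfin
    haveI := hproj
    obtain ⟨n, pr, hpr⟩ := Module.Finite.exists_fin' (End (op W)) N
    obtain ⟨sec, hsec⟩ := Module.projective_lifting_property pr LinearMap.id hpr
    have hπσ : ∀ y : N, pr (sec y) = y := fun y => by
      have := LinearMap.congr_fun hsec y
      simpa using this
    let e : (Fin n → End (op W)) →ₗ[End (op W)] (Fin n → End (op W)) := sec ∘ₗ pr
    have hee : ∀ x, e (e x) = e x := fun x => by
      show sec (pr (sec (pr x))) = sec (pr x)
      rw [hπσ]
    let Z : AddCat W := ⟨⨁ fun _ : Fin n => W, n, 𝟙 _, 𝟙 _, by simp⟩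
    let p : (⨁ fun _ : Fin n => W) ⟶ (⨁ fun _ : Fin n => W) :=
      biproduct.desc fun i => (eps W n).symm (e (Pi.single i 1))
    have hsum : ∀ c : Fin n → End (op W),
        ∑ i, (c i).unop ≫ (eps W n).symm (e (Pi.single i 1)) = (eps W n).symm (e c) := by
      intro c
      have hstep : ∀ i, (c i).unop ≫ (eps W n).symm (e (Pi.single i 1))
          = (eps W n).symm (e (Pi.single i (c i))) := by
        intro i
        show (c i) • (eps W n).symm (e (Pi.single i 1)) = _
        rw [← map_smul, ← map_smul]
        congr 2
        funext j
        simp only [Pi.smul_apply, smul_eq_mul, Pi.single_apply, mul_ite, mul_one, mul_zero]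
      rw [Finset.sum_congr rfl fun i _ => hstep i, ← map_sum, ← map_sum]
      congr 2
      exact Finset.univ_sum_single c
    have key : ∀ t : W ⟶ ⨁ fun _ : Fin n => W,
        t ≫ p = (eps W n).symm (e (eps W n t)) := by
      intro t
      conv_lhs => rw [← (eps W n).symm_apply_apply t, eps_symm_apply]
      rw [Preadditive.sum_comp]
      have : ∀ i, ((eps W n t i).unop ≫ biproduct.ι (fun _ : Fin n => W) i) ≫ p
          = (eps W n t i).unop ≫ (eps W n).symm (e (Pi.single i 1)) := by
        intro i
        rw [Category.assoc]
        congr 1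
        exact biproduct.ι_desc _ _
      rw [Finset.sum_congr rfl fun i _ => this i, hsum]
    have hidem : p ≫ p = p := by
      apply biproduct.hom_ext'
      intro i
      rw [← Category.assoc, key (biproduct.ι (fun _ : Fin n => W) i ≫ p),
        key (biproduct.ι (fun _ : Fin n => W) i), LinearEquiv.apply_symm_apply, hee]
    let P0 : Karoubi (AddCat W) := ⟨Z, ObjectProperty.homMk p, by apply ObjectProperty.hom_ext; exact hidem⟩
    have hmem : ∀ x : N, (eps W n).symm (sec x) ∈ karoubiHomSubmodule W P0 := by
      intro x
      show (eps W n).symm (sec x) ≫ p = (eps W n).symm (sec x)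
      rw [key, LinearEquiv.apply_symm_apply]
      congr 1
      show sec (pr (sec x)) = sec x
      rw [hπσ]
    let fwd : karoubiHomSubmodule W P0 →ₗ[End (op W)] N :=
      pr ∘ₗ (eps W n).toLinearMap ∘ₗ (karoubiHomSubmodule W P0).subtype
    let equiv : karoubiHomSubmodule W P0 ≃ₗ[End (op W)] N :=
      { fwd with
        invFun := fun x => ⟨(eps W n).symm (sec x), hmem x⟩
        left_inv := fun t => Subtype.ext (by
          show (eps W n).symm (sec (pr (eps W n t.1))) = t.1
          have h1 : (eps W n).symm (e (eps W n t.1)) = t.1 := by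
            rw [← key]
            exact t.2
          exact h1
          )
        right_inv := fun x => by
          show pr (eps W n ((eps W n).symm (sec x))) = x
          rw [LinearEquiv.apply_symm_apply, hπσ] }
    exact ⟨P0, ⟨equiv.toModuleIso⟩⟩
end
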